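/- Let g(x; φ, X) denote the equilibrium payoff of the adversary on one front when it allocates x ≥ 0 against a player with budget X > 0 defending total battlefield value φ > 0, namely g(x; φ, X) = φ·x/(2X) if x < X and g(x; φ, X) = φ·(1 − X/(2x)) if x ≥ X. Suppose φ1, φ2, X1, X2 are positive reals with φ1·X2 > φ2·X1 and 0 < 1 − √(φ1·X1·X2/φ2) ≤ X2. Then the point x* = √(φ1·X1·X2/φ2) lies in [0,1] and maximizes the adversary's total payoff f(x) = g(x; φ1, X1) + g(1 − x; φ2, X2) over all x ∈ [0,1]; that is, f(x) ≤ f(x*) for every x ∈ [0,1]. -/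

import Mathlib

/-- Equilibrium payoff of the adversary on one front when it allocates `x`
against a player with budget `X` defending total battlefield value `φ`. -/
noncomputable def advPayoff (x φ X : ℝ) : ℝ :=
  if x < X then φ * x / (2 * X) else φ * (1 - X / (2 * x))

lemma advPayoff_le (y φ X : ℝ) (hy : 0 ≤ y) (hφ : 0 < φ) (hX : 0 < X) :
    advPayoff y φ X ≤ φ * y / (2 * X) := by
  unfold advPayoff
  split_ifs with h
  · exact le_rfl
  · push_neg at h
    have hy0 : 0 < y := lt_of_lt_of_le hX h
    have h1 : 1 - X / (2 * y) ≤ y / (2 * X) := by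
      rw [sub_le_iff_le_add, div_add_div _ _ (by positivity) (by positivity),
        le_div_iff₀ (by positivity)]
      nlinarith [sq_nonneg (y - X)]
    calc φ * (1 - X / (2 * y)) ≤ φ * (y / (2 * X)) :=
          mul_le_mul_of_nonneg_left h1 hφ.le
      _ = φ * y / (2 * X) := by ring

theorem case2_adversary_opt (φ1 φ2 X1 X2 : ℝ)
    (hφ1 : 0 < φ1) (hφ2 : 0 < φ2) (hX1 : 0 < X1) (hX2 : 0 < X2)
    (hratio : φ1 * X2 > φ2 * X1)
    (hlo : 0 < 1 - Real.sqrt (φ1 * X1 * X2 / φ2))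
    (hhi : 1 - Real.sqrt (φ1 * X1 * X2 / φ2) ≤ X2) :
    Real.sqrt (φ1 * X1 * X2 / φ2) ∈ Set.Icc (0 : ℝ) 1 ∧
    ∀ x ∈ Set.Icc (0 : ℝ) 1,
      advPayoff x φ1 X1 + advPayoff (1 - x) φ2 X2 ≤
      advPayoff (Real.sqrt (φ1 * X1 * X2 / φ2)) φ1 X1 +
        advPayoff (1 - Real.sqrt (φ1 * X1 * X2 / φ2)) φ2 X2 := by
  set s := Real.sqrt (φ1 * X1 * X2 / φ2) with hs_def
  have harg : 0 < φ1 * X1 * X2 / φ2 := by positivity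
  have hs : 0 < s := Real.sqrt_pos.2 harg
  have hsq : s ^ 2 = φ1 * X1 * X2 / φ2 := Real.sq_sqrt harg.le
  have hss : φ2 * s ^ 2 = φ1 * X1 * X2 := by
    rw [hsq]; field_simp
  have hφ1eq : φ1 = φ2 * s ^ 2 / (X1 * X2) := by
    field_simp
    linarith [hss]
  have hX1s : X1 < s := by
    by_contra h
    push_neg at h
    have h2 : s * s ≤ X1 * X1 := mul_le_mul h h hs.le hX1.le
    nlinarith [mul_le_mul_of_nonneg_left h2 hφ2.le,
      mul_lt_mul_of_pos_left hratio hX1]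
  have hs1 : s < 1 := by linarith
  -- value of RHS
  have hV1 : advPayoff s φ1 X1 = φ1 * (1 - X1 / (2 * s)) := by
    unfold advPayoff
    rw [if_neg (not_lt.2 hX1s.le)]
  have hV2 : advPayoff (1 - s) φ2 X2 = φ2 * (1 - s) / (2 * X2) := by
    rcases lt_or_eq_of_le hhi with h | h
    · unfold advPayoff; rw [if_pos h]
    · unfold advPayoff
      rw [if_neg (not_lt.2 h.ge), ← h]
      have h1s : (1 : ℝ) - s ≠ 0 := ne_of_gt hlo
      field_simp
      norm_num
  -- key inequality : for any t > 0 the second-branch-style payoff is maximized at s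
  have key : ∀ t : ℝ, 0 < t →
      φ1 * (1 - X1 / (2 * t)) + φ2 * (1 - t) / (2 * X2) ≤
      φ1 * (1 - X1 / (2 * s)) + φ2 * (1 - s) / (2 * X2) := by
    intro t ht
    rw [← sub_nonneg]
    have hexp : (φ1 * (1 - X1 / (2 * s)) + φ2 * (1 - s) / (2 * X2) -
        (φ1 * (1 - X1 / (2 * t)) + φ2 * (1 - t) / (2 * X2))) =
        φ2 * s * (t - s) ^ 2 / (2 * t * s * X2) := by
      rw [hφ1eq]
      field_simp
      ring
    rw [hexp]
    positivity
  refine ⟨⟨hs.le, hs1.le⟩, ?_⟩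
  intro x hx
  obtain ⟨hx0, hx1⟩ := hx
  have hb2 : advPayoff (1 - x) φ2 X2 ≤ φ2 * (1 - x) / (2 * X2) :=
    advPayoff_le _ _ _ (by linarith) hφ2 hX2
  rw [hV1, hV2]
  rcases lt_or_ge x X1 with h | h
  · -- first branch on front 1
    have h1 : advPayoff x φ1 X1 = φ1 * x / (2 * X1) := by
      unfold advPayoff; rw [if_pos h]
    have hmain : φ1 * x / (2 * X1) + φ2 * (1 - x) / (2 * X2) ≤
        φ1 * (1 - X1 / (2 * s)) + φ2 * (1 - s) / (2 * X2) := by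
      rw [← sub_nonneg]
      have hexp : φ1 * (1 - X1 / (2 * s)) + φ2 * (1 - s) / (2 * X2) -
          (φ1 * x / (2 * X1) + φ2 * (1 - x) / (2 * X2)) =
          (φ2 * s * (s - X1) * (2 * s * X1 - x * (s + X1))) / (2 * X1 ^ 2 * X2 * s) := by
        rw [hφ1eq]
        field_simp
        ring
      rw [hexp]
      apply div_nonneg _ (by positivity)
      have hfac : x * (s + X1) ≤ 2 * s * X1 := by nlinarith
      have h2 : (0:ℝ) ≤ φ2 * s * (s - X1) :=
        mul_nonneg (mul_nonneg hφ2.le hs.le) (sub_pos.2 hX1s).le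
      exact mul_nonneg h2 (by linarith)
    linarith [h1 ▸ hmain]
  · -- second branch on front 1
    have h1 : advPayoff x φ1 X1 = φ1 * (1 - X1 / (2 * x)) := by
      unfold advPayoff; rw [if_neg (not_lt.2 h)]
    have hx0' : 0 < x := lt_of_lt_of_le hX1 h
    have := key x hx0'
    linarith [h1 ▸ this]
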